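/- For a ∈ (0,1), b ≠ 0, ∫_{−1}^{1} x·β(x; a, b) dx = (1/b)·log[(e^b a + (1−a))(e^{−b} a + (1−a))/(1−a)²] + (1/b²)·[L₂(−a e^b/(1−a)) − L₂(−a e^{−b}/(1−a))], where L₂(z) = −∫₀^z (1/t)·log(1−t) dt is the Euler dilogarithm. -/

import Mathlib

open Real MeasureTheory intervalIntegral
noncomputable def eulerDilog (z : ℝ) : ℝ := -∫ t in (0 : ℝ)..z, Real.log (1 - t) / t

lemma dilog_integrand_meas : Measurable (fun t : ℝ => Real.log (1 - t) / t) := by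
  exact (Real.measurable_log.comp (measurable_const.sub measurable_id)).div measurable_id

lemma dilog_integrable {z : ℝ} (hz : z < 0) :
    IntervalIntegrable (fun t : ℝ => Real.log (1 - t) / t) volume 0 z := by
  rw [intervalIntegrable_iff]
  apply Measure.integrableOn_of_bounded (M := 1)
  · exact (measure_Ioc_lt_top).ne
  · exact dilog_integrand_meas.aestronglyMeasurable
  · refine (ae_restrict_iff' measurableSet_uIoc).mpr (ae_of_all _ fun t ht => ?_)
    rw [Set.uIoc_of_ge hz.le] at ht
    obtain ⟨ht1, ht2⟩ := ht
    rcases eq_or_lt_of_le ht2 with h | h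
    · simp [h]
    · have h1 : 0 ≤ Real.log (1 - t) := Real.log_nonneg (by linarith)
      have h2 : Real.log (1 - t) ≤ -t := by
        have := Real.log_le_sub_one_of_pos (x := 1 - t) (by linarith)
        linarith
      rw [Real.norm_eq_abs, abs_div, abs_of_nonneg h1, abs_of_neg h]
      rw [div_le_one (by linarith)]
      exact h2

lemma dilog_hasDerivAt {z : ℝ} (hz : z < 0) :
    HasDerivAt eulerDilog (-(Real.log (1 - z) / z)) z := by
  have hmeas : StronglyMeasurableAtFilter (fun t : ℝ => Real.log (1 - t) / t) (nhds z) volume :=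
    ⟨Set.univ, Filter.univ_mem, dilog_integrand_meas.aestronglyMeasurable.restrict⟩
  have hcont : ContinuousAt (fun t : ℝ => Real.log (1 - t) / t) z := by
    apply ContinuousAt.div
    · exact (Real.continuousAt_log (by linarith)).comp (by fun_prop)
    · fun_prop
    · exact hz.ne
  exact (intervalIntegral.integral_hasDerivAt_right (dilog_integrable hz) hmeas hcont).neg

theorem stmt3 (a b : ℝ) (ha : a ∈ Set.Ioo (0 : ℝ) 1) (hb : b ≠ 0) :
    ∫ x in (-1 : ℝ)..1, x * (Real.exp (b * x) * a / (Real.exp (b * x) * a + (1 - a))) =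
      (1 / b) * Real.log ((Real.exp b * a + (1 - a)) * (Real.exp (-b) * a + (1 - a)) / (1 - a) ^ 2)
        + (1 / b ^ 2) *
          (eulerDilog (-(a * Real.exp b) / (1 - a)) - eulerDilog (-(a * Real.exp (-b)) / (1 - a))) := by
  obtain ⟨ha0, ha1⟩ := ha
  have hd : (0:ℝ) < 1 - a := by linarith
  have hD : ∀ x : ℝ, 0 < Real.exp (b * x) * a + (1 - a) := fun x => by positivity
  set F : ℝ → ℝ := fun x => x / b * Real.log ((Real.exp (b * x) * a + (1 - a)) / (1 - a))
      + 1 / b ^ 2 * eulerDilog (-(a * Real.exp (b * x)) / (1 - a)) with hF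
  have hderiv : ∀ x ∈ Set.uIcc (-1:ℝ) 1,
      HasDerivAt F (x * (Real.exp (b * x) * a / (Real.exp (b * x) * a + (1 - a)))) x := by
    intro x _
    set E := Real.exp (b * x) with hE
    have hEpos : 0 < E := Real.exp_pos _
    have h1 : HasDerivAt (fun y : ℝ => Real.exp (b * y) * a + (1 - a)) (E * b * a) x := by
      have := ((((hasDerivAt_id x).const_mul b).exp).mul_const a).add_const (1 - a)
      simpa [mul_comm, mul_assoc] using this
    have h2 : HasDerivAt (fun y => Real.log ((Real.exp (b * y) * a + (1 - a)) / (1 - a)))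
        (E * b * a / (E * a + (1 - a))) x := by
      have := (h1.div_const (1 - a)).log (by positivity)
      convert this using 1
      rw [div_div_div_eq]
      rw [div_eq_div_iff (by positivity) (by positivity)]
      ring
    have h3 : HasDerivAt (fun y : ℝ => y / b * Real.log ((Real.exp (b * y) * a + (1 - a)) / (1 - a)))
        (1 / b * Real.log ((E * a + (1 - a)) / (1 - a)) + x / b * (E * b * a / (E * a + (1 - a)))) x := by
      exact ((hasDerivAt_id x).div_const b).mul h2
    set z := -(a * E) / (1 - a) with hz
    have hzneg : z < 0 := div_neg_of_neg_of_pos (by nlinarith) hd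
    have hzd : HasDerivAt (fun y : ℝ => -(a * Real.exp (b * y)) / (1 - a)) (b * z) x := by
      have h := (((((hasDerivAt_id x).const_mul b).exp).const_mul a).neg).div_const (1 - a)
      simp only [id_eq, mul_one] at h
      refine h.congr_deriv ?_
      rw [hz]
      ring
    have h4 := (dilog_hasDerivAt hzneg).comp x hzd
    have hkey : 1 - z = (E * a + (1 - a)) / (1 - a) := by
      rw [hz]; field_simp; ring
    have htot := h3.add (h4.const_mul (1 / b ^ 2))
    refine htot.congr_deriv ?_
    rw [hkey]
    have hzne : z ≠ 0 := hzneg.ne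
    have hDne : E * a + (1 - a) ≠ 0 := (hD x).ne'
    field_simp
    ring
  have hcont : Continuous (fun x : ℝ => x * (Real.exp (b * x) * a / (Real.exp (b * x) * a + (1 - a)))) := by
    apply continuous_id.mul
    exact Continuous.div (by fun_prop) (by fun_prop) (fun x => (hD x).ne')
  have := intervalIntegral.integral_eq_sub_of_hasDerivAt hderiv (hcont.intervalIntegrable _ _)
  rw [this, hF]
  simp only [mul_one, mul_neg_one]
  have hA : (0:ℝ) < Real.exp b * a + (1 - a) := by positivity
  have hB : (0:ℝ) < Real.exp (-b) * a + (1 - a) := by positivity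
  rw [Real.log_div hA.ne' hd.ne', Real.log_div hB.ne' hd.ne',
    Real.log_div (by positivity) (by positivity), Real.log_mul hA.ne' hB.ne', Real.log_pow]
  push_cast
  ring
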